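/- The Souriau map ℓ = u·ℓ_p ↦ u·uᵀ is well-defined: if u, u' ∈ U(n,ℂ) satisfy u·ℓ_p = u'·ℓ_p as subspaces of ℝ^{2n}, then u·uᵀ = u'·u'ᵀ. -/
import Mathlib


open Matrix Complex

noncomputable section

/-- Phase space ℝ^{2n} = ℝ^n_x × ℝ^n_p. -/
abbrev V (n : ℕ) := (Fin n → ℝ) × (Fin n → ℝ)

/-- Standard symplectic form σ(z,z') = p·x' - p'·x. -/
def Omega (n : ℕ) (z w : V n) : ℝ := z.2 ⬝ᵥ w.1 - w.2 ⬝ᵥ z.1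

/-- Lagrangian plane: n-dimensional subspace on which σ vanishes. -/
def IsLagrangian (n : ℕ) (L : Submodule ℝ (V n)) : Prop :=
  Module.finrank ℝ L = n ∧ ∀ z ∈ L, ∀ w ∈ L, Omega n z w = 0

/-- Symplectic linear map. -/
def IsSymplectic (n : ℕ) (S : V n →ₗ[ℝ] V n) : Prop :=
  Function.Bijective S ∧ ∀ z w, Omega n (S z) (S w) = Omega n z w

/-- Dimension of a maximal subspace on which Q is positive. -/
def posIndex {E : Type*} [AddCommGroup E] [Module ℝ E] (Q : E → ℝ) : ℕ :=
  sSup {k | ∃ W : Submodule ℝ E, Module.finrank ℝ W = k ∧ ∀ v ∈ W, v ≠ 0 → 0 < Q v}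

def negIndex {E : Type*} [AddCommGroup E] [Module ℝ E] (Q : E → ℝ) : ℕ :=
  posIndex fun v => -Q v

/-- σ(z,z') + σ(z',z'') + σ(z'',z) on ℓ × ℓ' × ℓ''. -/
def tripleForm (n : ℕ) (L L' L'' : Submodule ℝ (V n)) : (L × L' × L'') → ℝ :=
  fun t => Omega n t.1 t.2.1 + Omega n t.2.1 t.2.2 + Omega n t.2.2 t.1

/-- Kashiwara signature τ(ℓ,ℓ',ℓ''). -/
def tau (n : ℕ) (L L' L'' : Submodule ℝ (V n)) : ℤ :=
  (posIndex (tripleForm n L L' L'') : ℤ) - negIndex (tripleForm n L L' L'')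

/-- ∂dim(ℓ,ℓ',ℓ''). -/
def ddim (n : ℕ) (L L' L'' : Submodule ℝ (V n)) : ℤ :=
  (Module.finrank ℝ ↥(L ⊓ L') : ℤ) - Module.finrank ℝ ↥(L ⊓ L'')
    + Module.finrank ℝ ↥(L' ⊓ L'')

/-- Index of inertia. -/
def Inert (n : ℕ) (L L' L'' : Submodule ℝ (V n)) : ℤ :=
  (tau n L L' L'' - ddim n L L' L'' + n) / 2

/-- Real and imaginary parts of a complex matrix. -/
def reM (n : ℕ) (u : Matrix (Fin n) (Fin n) ℂ) : Matrix (Fin n) (Fin n) ℝ :=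
  of fun i j => (u i j).re

def imM (n : ℕ) (u : Matrix (Fin n) (Fin n) ℂ) : Matrix (Fin n) (Fin n) ℝ :=
  of fun i j => (u i j).im

/-- The identification A+iB ↦ [[A,-B],[B,A]] acting on ℝ^{2n}. -/
def uReal (n : ℕ) (u : Matrix (Fin n) (Fin n) ℂ) : V n →ₗ[ℝ] V n where
  toFun z := (reM n u *ᵥ z.1 - imM n u *ᵥ z.2, imM n u *ᵥ z.1 + reM n u *ᵥ z.2)
  map_add' a b := by
    ext i <;> (simp [Matrix.mulVec_add]; try ring)
  map_smul' c a := by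
    ext i <;> (simp [Matrix.mulVec_smul]; try ring)

/-- The momentum plane ℓ_p = 0 × ℝ^n. -/
def ellP (n : ℕ) : Submodule ℝ (V n) := Submodule.prod ⊥ ⊤


/-- Complexification of a real vector fed into a complex matrix. -/
lemma mulVec_complexify (n : ℕ) (M : Matrix (Fin n) (Fin n) ℂ) (p : Fin n → ℝ) (i : Fin n) :
    ((M *ᵥ fun k => (p k : ℂ)) i).re = (reM n M *ᵥ p) i ∧
      ((M *ᵥ fun k => (p k : ℂ)) i).im = (imM n M *ᵥ p) i := by
  constructor <;>
  · simp only [Matrix.mulVec, dotProduct, reM, imM, Matrix.of_apply,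
      Complex.re_sum, Complex.im_sum, Complex.mul_re, Complex.mul_im,
      Complex.ofReal_re, Complex.ofReal_im]
    apply Finset.sum_congr rfl
    intro k _
    ring

/-- The Souriau map is well-defined: u·ℓ_p = u'·ℓ_p implies u·uᵀ = u'·u'ᵀ. -/
theorem souriau_well_defined (n : ℕ) (u u' : Matrix (Fin n) (Fin n) ℂ)
    (hu : u ∈ Matrix.unitaryGroup (Fin n) ℂ) (hu' : u' ∈ Matrix.unitaryGroup (Fin n) ℂ)
    (h : (ellP n).map (uReal n u) = (ellP n).map (uReal n u')) :
    u * uᵀ = u' * u'ᵀ := by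
  set w : Matrix (Fin n) (Fin n) ℂ := star u' * u with hw_def
  have hu1 : star u * u = 1 := (Unitary.mem_iff.mp hu).1
  have hu2 : u * star u = 1 := (Unitary.mem_iff.mp hu).2
  have hu'1 : star u' * u' = 1 := (Unitary.mem_iff.mp hu').1
  have hu'2 : u' * star u' = 1 := (Unitary.mem_iff.mp hu').2
  -- every entry of w is real
  have hreal : ∀ i j, (w i j).im = 0 := by
    intro i j
    set p : Fin n → ℝ := Pi.single j 1 with hp_def
    have hmem : uReal n u (0, p) ∈ (ellP n).map (uReal n u) :=
      Submodule.mem_map_of_mem (by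
        simp [ellP, Submodule.mem_prod])
    rw [h] at hmem
    obtain ⟨z, hz, hzeq⟩ := hmem
    have hz1 : z.1 = 0 := by
      have := (Submodule.mem_prod.mp hz).1
      simpa using this
    set q : Fin n → ℝ := z.2 with hq_def
    -- component equations
    have hzeq' : (- (imM n u' *ᵥ q), reM n u' *ᵥ q) =
        (- (imM n u *ᵥ p), reM n u *ᵥ p) := by
      have h1 : uReal n u' z =
          (reM n u' *ᵥ z.1 - imM n u' *ᵥ z.2, imM n u' *ᵥ z.1 + reM n u' *ᵥ z.2) := rfl
      have h2 : uReal n u (0, p) =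
          (reM n u *ᵥ 0 - imM n u *ᵥ p, imM n u *ᵥ 0 + reM n u *ᵥ p) := rfl
      rw [h1, hz1] at hzeq
      rw [h2] at hzeq
      simpa [Matrix.mulVec_zero] using hzeq
    have hre : reM n u' *ᵥ q = reM n u *ᵥ p := congrArg Prod.snd hzeq'
    have him : imM n u' *ᵥ q = imM n u *ᵥ p := by
      have := congrArg Prod.fst hzeq'
      simpa [neg_eq_iff_eq_neg] using this
    -- complexified equality : u *ᵥ p̂ = u' *ᵥ q̂
    have hcvec : (u *ᵥ fun k => ((p k : ℝ) : ℂ)) = u' *ᵥ fun k => ((q k : ℝ) : ℂ) := by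
      funext i
      apply Complex.ext
      · rw [(mulVec_complexify n u p i).1, (mulVec_complexify n u' q i).1, hre]
      · rw [(mulVec_complexify n u p i).2, (mulVec_complexify n u' q i).2, him]
    -- p̂ is a standard basis vector
    have hp : (fun k => ((p k : ℝ) : ℂ)) = Pi.single j (1 : ℂ) := by
      funext k
      by_cases hk : k = j <;> simp [hp_def, Pi.single_apply, hk]
    -- column j of w equals q̂
    have hcol : ∀ i, w i j = ((q i : ℝ) : ℂ) := by
      intro i
      have : w *ᵥ Pi.single j (1 : ℂ) = fun k => ((q k : ℝ) : ℂ) := by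
        rw [hw_def, ← Matrix.mulVec_mulVec, ← hp, hcvec]
        rw [Matrix.mulVec_mulVec, hu'1, Matrix.one_mulVec]
      have := congrFun this i
      simpa [Matrix.mulVec_single] using this
    rw [hcol i]
    simp
  -- hence star w = wᵀ
  have hstar : star w = wᵀ := by
    ext i j
    have : (starRingEnd ℂ) (w j i) = w j i := Complex.conj_eq_iff_im.mpr (hreal j i)
    simpa [Matrix.conjTranspose_apply, Matrix.transpose_apply] using this
  -- w is unitary
  have hwu : w ∈ Matrix.unitaryGroup (Fin n) ℂ :=
    mul_mem (Unitary.star_mem hu') hu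
  have hwwT : w * wᵀ = 1 := by
    rw [← hstar]
    exact (Unitary.mem_iff.mp hwu).2
  -- u = u' * w
  have huw : u = u' * w := by
    rw [hw_def, ← mul_assoc, hu'2, one_mul]
  calc u * uᵀ = (u' * w) * (u' * w)ᵀ := by rw [← huw]
    _ = u' * (w * wᵀ) * u'ᵀ := by
        rw [Matrix.transpose_mul]
        simp only [mul_assoc]
    _ = u' * u'ᵀ := by rw [hwwT, mul_one]
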